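/- Let G = (V,E) be a finite simple graph and a ∈ V. Then the projections of the graph state onto the computational-basis (Pauli-Z eigenbasis) states of qubit a satisfy P_{Z,+}^{(a)} |G⟩ = (1/√2) |Z,+⟩^{(a)} ⊗ |G−a⟩ and P_{Z,−}^{(a)} |G⟩ = (1/√2) |Z,−⟩^{(a)} ⊗ (⨂_{b∈N_a} Z^{(b)}) |G−a⟩, where |G−a⟩ is the graph state of the vertex-deleted graph G−a on the qubits V∖{a}. -/

import Mathlib

open scoped BigOperators

noncomputable section

/-- The state space of a collection of qubits indexed by `V`:
amplitudes on computational-basis configurations `V → Bool`. -/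
abbrev QState (V : Type*) := (V → Bool) → ℂ

variable {V : Type*}

/-- The inner product `⟨ψ|φ⟩`. -/
def qInner [Fintype V] [DecidableEq V] (ψ φ : QState V) : ℂ :=
  ∑ x, starRingEnd ℂ (ψ x) * φ x

/-- Pauli `X` acting on qubit `a`. -/
def pauliX [DecidableEq V] (a : V) (ψ : QState V) : QState V :=
  fun x => ψ (Function.update x a (!x a))

/-- Pauli `Z` acting on qubit `a`. -/
def pauliZ (a : V) (ψ : QState V) : QState V :=
  fun x => (if x a then (-1 : ℂ) else 1) * ψ x

/-- Pauli `Y` acting on qubit `a`. -/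
def pauliY [DecidableEq V] (a : V) (ψ : QState V) : QState V :=
  fun x => (if x a then Complex.I else -Complex.I) * ψ (Function.update x a (!x a))

/-- The tensor product `⨂_{b ∈ s} Z^{(b)}` of Pauli `Z` over the qubits in `s`. -/
def pauliZProd (s : Finset V) (ψ : QState V) : QState V :=
  fun x => (∏ b ∈ s, if x b then (-1 : ℂ) else 1) * ψ x

/-- A tensor product over the qubits in `s` of the diagonal single-qubit gate
`diag (f false, f true)`. -/
def diagProd (s : Finset V) (f : Bool → ℂ) (ψ : QState V) : QState V :=
  fun x => (∏ b ∈ s, f (x b)) * ψ x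

/-- The sign `(-1)^{x u · x v}` contributed by an edge `{u, v}`. -/
def edgeSign (x : V → Bool) : Sym2 V → ℂ :=
  Sym2.lift ⟨fun a b => if x a && x b then (-1 : ℂ) else 1,
    fun a b => by simp [Bool.and_comm]⟩

/-- The graph state `|G⟩ = (∏_{{u,v}∈E} CZ^{(uv)}) ⨂_v |+⟩^{(v)}` of a finite simple graph,
written out in amplitudes. -/
def graphState [Fintype V] [DecidableEq V] (G : SimpleGraph V) [DecidableRel G.Adj] :
    QState V :=
  fun x => ((Real.sqrt 2 : ℝ) : ℂ)⁻¹ ^ (Fintype.card V) * ∏ e ∈ G.edgeFinset, edgeSign x e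

/-- Local complementation `τ_a(G)` of a graph `G` at the vertex `a`: complement the
adjacency among the neighbors of `a`, leaving all other adjacencies unchanged. -/
def localComp (G : SimpleGraph V) (a : V) : SimpleGraph V where
  Adj u v :=
    (G.Adj a u ∧ G.Adj a v ∧ u ≠ v ∧ ¬ G.Adj u v) ∨
      ((¬ (G.Adj a u ∧ G.Adj a v)) ∧ G.Adj u v)
  symm := by
    constructor
    intro u v h
    rcases h with ⟨h1, h2, h3, h4⟩ | ⟨h1, h2⟩
    · exact Or.inl ⟨h2, h1, h3.symm, fun h => h4 h.symm⟩
    · exact Or.inr ⟨fun h => h1 ⟨h.2, h.1⟩, h2.symm⟩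
  loopless := by
    constructor
    intro u h
    rcases h with ⟨_, _, h3, _⟩ | ⟨_, h2⟩
    · exact h3 rfl
    · exact G.irrefl h2

instance [DecidableEq V] (G : SimpleGraph V) [DecidableRel G.Adj] (a : V) :
    DecidableRel (localComp G a).Adj := fun u v =>
  inferInstanceAs (Decidable
    ((G.Adj a u ∧ G.Adj a v ∧ u ≠ v ∧ ¬ G.Adj u v) ∨
      ((¬ (G.Adj a u ∧ G.Adj a v)) ∧ G.Adj u v)))

/-- The induced subgraph of `G` on the vertices satisfying `P`. -/
def inducedSub (G : SimpleGraph V) (P : V → Prop) : SimpleGraph {v : V // P v} :=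
  SimpleGraph.comap Subtype.val G

instance (G : SimpleGraph V) [DecidableRel G.Adj] (P : V → Prop) :
    DecidableRel (inducedSub G P).Adj := fun u v =>
  inferInstanceAs (Decidable (G.Adj u.1 v.1))

/-- The eigenvectors `|Z,+⟩ = |0⟩`, `|Z,-⟩ = |1⟩` of Pauli `Z`
(`s = false` the `+1`-eigenvector, `s = true` the `-1`-eigenvector). -/
def zVec (s : Bool) : Bool → ℂ := fun c => if c = s then 1 else 0

/-- The eigenvectors `|X,±⟩ = (|0⟩ ± |1⟩)/√2` of Pauli `X`
(`s = false` the `+1`-eigenvector, `s = true` the `-1`-eigenvector). -/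
def xVec (s : Bool) : Bool → ℂ :=
  fun c => ((Real.sqrt 2 : ℝ) : ℂ)⁻¹ * (if c && s then -1 else 1)

/-- The eigenvectors `|Y,±⟩ = (|0⟩ ± i|1⟩)/√2` of Pauli `Y`
(`s = false` the `+1`-eigenvector, `s = true` the `-1`-eigenvector). -/
def yVec (s : Bool) : Bool → ℂ :=
  fun c => ((Real.sqrt 2 : ℝ) : ℂ)⁻¹ *
    (if c then (if s then -Complex.I else Complex.I) else 1)

/-- The rank-one projector `|v⟩⟨v|` on qubit `a` (identity elsewhere),
for a single-qubit vector `v`. -/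
def projDir [DecidableEq V] (a : V) (v : Bool → ℂ) (ψ : QState V) : QState V :=
  fun x => v (x a) *
    (starRingEnd ℂ (v false) * ψ (Function.update x a false) +
      starRingEnd ℂ (v true) * ψ (Function.update x a true))

/-- The tensor product `|v⟩^{(a)} ⊗ |φ⟩` of a single-qubit state on qubit `a` with a state
on the remaining qubits. -/
def tensorQubit [DecidableEq V] (a : V) (v : Bool → ℂ) (φ : QState {u : V // u ≠ a}) :
    QState V :=
  fun x => v (x a) * φ (fun u => x u.1)

/-- Apply a single-qubit gate with matrix entries `m r c = ⟨r|M|c⟩` on qubit `a`. -/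
def applyGate [DecidableEq V] (a : V) (m : Bool → Bool → ℂ) (ψ : QState V) : QState V :=
  fun x => m (x a) false * ψ (Function.update x a false) +
    m (x a) true * ψ (Function.update x a true)

/-- The square roots `√(±iY) = (I ± iY)/√2`
(`s = false` for `√(+iY)`, `s = true` for `√(-iY)`). -/
def sqrtiY (s : Bool) : Bool → Bool → ℂ :=
  fun r c => ((Real.sqrt 2 : ℝ) : ℂ)⁻¹ *
    (if s then (if r = false ∧ c = true then -1 else 1)
     else (if r = true ∧ c = false then -1 else 1))

/-- The Hadamard gate. -/
def hadamard : Bool → Bool → ℂ :=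
  fun r c => ((Real.sqrt 2 : ℝ) : ℂ)⁻¹ * (if r && c then -1 else 1)

/-- Apply a tensor product of single-qubit gates, one on each qubit. -/
def applyLocal [Fintype V] [DecidableEq V] (u : V → Bool → Bool → ℂ) (ψ : QState V) :
    QState V :=
  fun x => ∑ y : V → Bool, (∏ v, u v (x v) (y v)) * ψ y

/-- `2×2` matrix multiplication (matrices as `Bool → Bool → ℂ`). -/
def matMul2 (a b : Bool → Bool → ℂ) : Bool → Bool → ℂ :=
  fun r c => ∑ k : Bool, a r k * b k c

/-- Adjoint of a `2×2` matrix. -/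
def matAdj2 (a : Bool → Bool → ℂ) : Bool → Bool → ℂ := fun r c => starRingEnd ℂ (a c r)

def idMat : Bool → Bool → ℂ := fun r c => if r = c then 1 else 0
def xMat : Bool → Bool → ℂ := fun r c => if r = c then 0 else 1
def yMat : Bool → Bool → ℂ := fun r c => if r = c then 0 else if r then Complex.I else -Complex.I
def zMat : Bool → Bool → ℂ := fun r c => if r = c then (if r then -1 else 1) else 0

/-- A `2×2` matrix is unitary. -/
def IsUnitary2 (u : Bool → Bool → ℂ) : Prop := matMul2 (matAdj2 u) u = idMat

/-- A single-qubit Clifford unitary: a unitary conjugating `X` and `Z` into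
`i^k·P` with `P` a Pauli matrix. -/
def IsClifford1 (u : Bool → Bool → ℂ) : Prop :=
  IsUnitary2 u ∧
    (∃ (k : ℕ) (P : Bool → Bool → ℂ), P ∈ ({idMat, xMat, yMat, zMat} : Set _) ∧
      matMul2 (matMul2 u xMat) (matAdj2 u) = Complex.I ^ k • P) ∧
    (∃ (k : ℕ) (P : Bool → Bool → ℂ), P ∈ ({idMat, xMat, yMat, zMat} : Set _) ∧
      matMul2 (matMul2 u zMat) (matAdj2 u) = Complex.I ^ k • P)

/-- The action of the `n`-qubit Pauli operator `c · ⨂_v X^{xv v} Z^{zv v}`. -/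
def pauliAction [Fintype V] (c : ℂ) (xv zv : V → Bool) (ψ : QState V) : QState V :=
  fun s => c * (∏ v, if zv v && (xor (s v) (xv v)) then (-1 : ℂ) else 1) *
    ψ (fun v => xor (s v) (xv v))

/-- The outer product `|ψ⟩⟨φ|` as a matrix on configurations. -/
def outer (ψ φ : QState V) : (V → Bool) → (V → Bool) → ℂ :=
  fun x y => ψ x * starRingEnd ℂ (φ y)

open Classical in
/-- Partial trace keeping the qubits that satisfy `P` (tracing out the others). -/
def ptraceKeep [Fintype V] [DecidableEq V] (P : V → Prop)
    (ρ : (V → Bool) → (V → Bool) → ℂ) :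
    ({v : V // P v} → Bool) → ({v : V // P v} → Bool) → ℂ :=
  fun x y => ∑ z : {v : V // ¬ P v} → Bool,
    ρ (fun w => if h : P w then x ⟨w, h⟩ else z ⟨w, h⟩)
      (fun w => if h : P w then y ⟨w, h⟩ else z ⟨w, h⟩)

open Classical in
/-- Apply a product of single-qubit bras `⟨bra v|` to each qubit `v` satisfying `P`,
leaving a state on the remaining qubits. -/
def applyBras [Fintype V] [DecidableEq V] (P : V → Prop) (bra : V → Bool → ℂ)
    (ψ : QState V) : QState {v : V // ¬ P v} :=
  fun x => ∑ z : {v : V // P v} → Bool,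
    (∏ v : {v : V // P v}, bra v.1 (z v)) *
      ψ (fun w => if h : P w then z ⟨w, h⟩ else x ⟨w, h⟩)

/-- A density operator: hermitian, trace one, positive semidefinite. -/
def IsDensityOp {α : Type*} [Fintype α] [DecidableEq α]
    (ρ : (α → Bool) → (α → Bool) → ℂ) : Prop :=
  (∀ x y, starRingEnd ℂ (ρ y x) = ρ x y) ∧ (∑ x, ρ x x = 1) ∧
    ∀ ψ : (α → Bool) → ℂ, ∃ r : ℝ, 0 ≤ r ∧
      (∑ x, ∑ y, starRingEnd ℂ (ψ x) * ρ x y * ψ y) = (r : ℂ)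

open Classical in
/-- Separability of an operator on the qubits indexed by `α` with respect to the
bipartition `(A, Aᶜ)`: a finite convex combination of tensor products of density
operators. -/
def SeparableWrt {α : Type*} [Fintype α] [DecidableEq α] (A : Set α)
    (ρ : (α → Bool) → (α → Bool) → ℂ) : Prop :=
  ∃ (k : ℕ) (p : Fin k → ℝ)
    (σ : Fin k → ({a : α // a ∈ A} → Bool) → ({a : α // a ∈ A} → Bool) → ℂ)
    (τ : Fin k → ({a : α // a ∉ A} → Bool) → ({a : α // a ∉ A} → Bool) → ℂ),
    (∀ i, 0 ≤ p i) ∧ (∑ i, p i = 1) ∧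
    (∀ i, IsDensityOp (σ i)) ∧ (∀ i, IsDensityOp (τ i)) ∧
    ∀ x y, ρ x y = ∑ i, (p i : ℂ) *
      (σ i (fun a => x a.1) (fun a => y a.1) * τ i (fun a => x a.1) (fun a => y a.1))


instance {α : Type*} [DecidableEq α] (r : α → α → Prop) [DecidableRel r] :
    DecidableRel (SimpleGraph.fromRel r).Adj := fun a b =>
  inferInstanceAs (Decidable (a ≠ b ∧ (r a b ∨ r b a)))

/-- The line graph on `{1, …, n}` (as `Fin n`) with edges between consecutive vertices. -/
def lineGraph (n : ℕ) : SimpleGraph (Fin n) :=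
  SimpleGraph.fromRel (fun i j => (i : ℕ) + 1 = (j : ℕ))

instance (n : ℕ) : DecidableRel (lineGraph n).Adj := fun a b =>
  inferInstanceAs (Decidable (a ≠ b ∧ ((a : ℕ) + 1 = (b : ℕ) ∨ (b : ℕ) + 1 = (a : ℕ))))

/-- The extension `I_R ⊗ s` of an operator `s` on `n` qubits by the identity on an extra
reference qubit labelled `0`. -/
def liftOp {n : ℕ} (s : QState (Fin n) → QState (Fin n)) (ψ : QState (Fin (n + 1))) :
    QState (Fin (n + 1)) :=
  fun x => s (fun y => ψ (Fin.cons (x 0) y)) (fun k => x k.succ)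

end

noncomputable section Aux
variable {V : Type*}

lemma edgeProd_split [Fintype V] [DecidableEq V] (G : SimpleGraph V) [DecidableRel G.Adj]
    (a : V) (y : V → Bool) :
    ∏ e ∈ G.edgeFinset, edgeSign y e =
      (∏ b ∈ G.neighborFinset a, (if y a && y b then (-1:ℂ) else 1)) *
      ∏ e ∈ (inducedSub G (· ≠ a)).edgeFinset, edgeSign (fun u => y u.1) e := by
  classical
  rw [← Finset.prod_filter_mul_prod_filter_not G.edgeFinset (fun e => a ∈ e)]
  congr 1
  · refine (Finset.prod_bij (fun b _ => s(a, b)) ?_ ?_ ?_ ?_).symm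
    · intro b hb
      simp only [Finset.mem_filter, SimpleGraph.mem_edgeFinset, SimpleGraph.mem_edgeSet]
      exact ⟨by simpa using hb, Sym2.mem_mk_left a b⟩
    · intro b1 h1 b2 h2 h
      exact Sym2.congr_right.mp h
    · intro e he
      simp only [Finset.mem_filter, SimpleGraph.mem_edgeFinset] at he
      obtain ⟨he1, he2⟩ := he
      induction e using Sym2.inductionOn with
      | hf u v =>
        rw [SimpleGraph.mem_edgeSet] at he1
        rcases Sym2.mem_iff.mp he2 with rfl | rfl
        · exact ⟨v, by simpa using he1, rfl⟩
        · exact ⟨u, by simpa using he1.symm, Sym2.eq_swap⟩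
    · intro b hb
      rfl
  · refine (Finset.prod_bij (fun e _ => Sym2.map Subtype.val e) ?_ ?_ ?_ ?_).symm
    · intro e he
      induction e using Sym2.inductionOn with
      | hf u v =>
        simp only [SimpleGraph.mem_edgeFinset, SimpleGraph.mem_edgeSet] at he
        simp only [Sym2.map_pair_eq, Finset.mem_filter, SimpleGraph.mem_edgeFinset,
          SimpleGraph.mem_edgeSet, Sym2.mem_iff]
        exact ⟨he, by rintro (h | h) <;> [exact u.2 h.symm; exact v.2 h.symm]⟩
    · intro e1 h1 e2 h2 h
      exact Sym2.map.injective Subtype.val_injective h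
    · intro e he
      simp only [Finset.mem_filter, SimpleGraph.mem_edgeFinset] at he
      obtain ⟨he1, he2⟩ := he
      induction e using Sym2.inductionOn with
      | hf u v =>
        rw [SimpleGraph.mem_edgeSet] at he1
        simp only [Sym2.mem_iff, not_or] at he2
        refine ⟨s(⟨u, fun h => he2.1 h.symm⟩, ⟨v, fun h => he2.2 h.symm⟩), ?_, ?_⟩
        · rw [SimpleGraph.mem_edgeFinset, SimpleGraph.mem_edgeSet]; exact he1
        · simp [Sym2.map_pair_eq]
    · intro e he
      induction e using Sym2.inductionOn with
      | hf u v => simp [edgeSign, Sym2.map_pair_eq]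

lemma neighborProd_subtype [Fintype V] [DecidableEq V] (G : SimpleGraph V)
    [DecidableRel G.Adj] (a : V) (x : V → Bool) :
    (∏ b ∈ G.neighborFinset a, (if x b then (-1:ℂ) else 1)) =
      ∏ b ∈ Finset.univ.filter (fun b : {v : V // v ≠ a} => G.Adj a b.1),
        (if x b.1 then (-1:ℂ) else 1) := by
  refine (Finset.prod_bij (fun b _ => b.1) ?_ ?_ ?_ ?_).symm
  · intro b hb
    simp only [Finset.mem_filter, Finset.mem_univ, true_and] at hb
    simpa using hb
  · intro b1 h1 b2 h2 h
    exact Subtype.ext h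
  · intro b hb
    have hadj : G.Adj a b := by simpa using hb
    exact ⟨⟨b, fun h => G.irrefl (h ▸ hadj)⟩, by simpa using hadj, rfl⟩
  · intro b hb
    rfl

end Aux

/-- Projecting qubit `a` of a graph state onto the Pauli-`Z` eigenbasis:
`P_{Z,+}^{(a)} |G⟩ = (1/√2) |Z,+⟩^{(a)} ⊗ |G−a⟩` and
`P_{Z,−}^{(a)} |G⟩ = (1/√2) |Z,−⟩^{(a)} ⊗ (⨂_{b∈N_a} Z^{(b)}) |G−a⟩`. -/
theorem stmt2 {V : Type*} [Fintype V] [DecidableEq V]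
    (G : SimpleGraph V) [DecidableRel G.Adj] (a : V) :
    projDir a (zVec false) (graphState G) =
      ((Real.sqrt 2 : ℝ) : ℂ)⁻¹ •
        tensorQubit a (zVec false) (graphState (inducedSub G (· ≠ a))) ∧
    projDir a (zVec true) (graphState G) =
      ((Real.sqrt 2 : ℝ) : ℂ)⁻¹ •
        tensorQubit a (zVec true)
          (pauliZProd (Finset.univ.filter (fun b : {v : V // v ≠ a} => G.Adj a b.1))
            (graphState (inducedSub G (· ≠ a)))) := by
  classical
  have hcard : Fintype.card V = Fintype.card {v : V // v ≠ a} + 1 := by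
    have h1 : 0 < Fintype.card V := Fintype.card_pos_iff.mpr ⟨a⟩
    have h2 : Fintype.card {v : V // v ≠ a} = Fintype.card V - 1 := by
      rw [Fintype.card_subtype, Finset.filter_ne', Finset.card_erase_of_mem (Finset.mem_univ a),
        Finset.card_univ]
    omega
  have key : ∀ x : V → Bool, graphState G x =
      ((Real.sqrt 2 : ℝ) : ℂ)⁻¹ *
        ((∏ b ∈ G.neighborFinset a, (if x a && x b then (-1:ℂ) else 1)) *
          graphState (inducedSub G (· ≠ a)) (fun u => x u.1)) := by
    intro x
    unfold graphState
    rw [edgeProd_split G a x, hcard, pow_succ]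
    ring
  have hupd : ∀ (x : V → Bool) (s : Bool), (fun u : {v : V // v ≠ a} =>
      Function.update x a s u.1) = fun u => x u.1 := by
    intro x s
    funext u
    exact Function.update_of_ne u.2 _ _
  constructor
  · funext x
    simp only [projDir, zVec, tensorQubit, Pi.smul_apply, smul_eq_mul]
    cases h : x a
    · have hx : Function.update x a false = x := by
        rw [← h]; exact Function.update_eq_self a x
      rw [hx, key x]
      simp [h]
    · simp
  · funext x
    simp only [projDir, zVec, tensorQubit, pauliZProd, Pi.smul_apply, smul_eq_mul]
    cases h : x a
    · simp
    · have hx : Function.update x a true = x := by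
        rw [← h]; exact Function.update_eq_self a x
      rw [hx, key x]
      simp only [h, Bool.true_and, if_true, map_one, map_zero, one_mul, zero_mul,
        add_zero, zero_add, Bool.false_eq_true, if_false]
      rw [neighborProd_subtype G a x]
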